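/- arXiv:0804.0526 — 2 statements merged into one kernel-verified Lean document; each statement's English description precedes it below -/
import Mathlib

section
/- The unilateral shift S on ℓ²(ℕ) is an isometry (S*S = 1), the operator S*S − SS* = 1 − SS* is the rank-one orthogonal projection onto the span of δ₀, and the C*-subalgebra of B(ℓ²(ℕ)) generated by S contains every compact operator on ℓ²(ℕ). -/
/- ℓ²(ℕ) with its standard orthonormal basis (δₙ). -/
noncomputable section

abbrev l2N : Type := lp (fun _ : ℕ => ℂ) 2

/-- The standard basis vector δₙ of ℓ²(ℕ). -/
def δ (n : ℕ) : l2N := lp.single 2 n 1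

set_option maxHeartbeats 1000000

section Aux
open scoped InnerProductSpace
open ContinuousLinearMap

def B : HilbertBasis ℕ ℂ l2N := ⟨LinearIsometryEquiv.refl ℂ l2N⟩
lemma B_eq (n : ℕ) : B n = δ n := by
  classical
  rw [← B.repr_symm_single]; rfl
lemma B_coe : (B : ℕ → l2N) = δ := funext B_eq
lemma inner_delta (m n : ℕ) : ⟪δ m, δ n⟫_ℂ = if m = n then 1 else 0 := by
  rw [← B_eq, ← B_eq]; exact orthonormal_iff_ite.mp B.orthonormal m n
lemma vec_ext {x y : l2N} (h : ∀ n, ⟪δ n, x⟫_ℂ = ⟪δ n, y⟫_ℂ) : x = y := by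
  apply B.repr.injective
  ext i
  rw [B.repr_apply_apply, B.repr_apply_apply, B_eq]; exact h i
lemma dense_span_delta : Dense (Submodule.span ℂ (Set.range δ) : Set l2N) := by
  rw [Submodule.dense_iff_topologicalClosure_eq_top, ← B_coe]; exact B.dense_span
lemma clm_ext {f g : l2N →L[ℂ] l2N} (h : ∀ n, f (δ n) = g (δ n)) : f = g := by
  apply ContinuousLinearMap.ext_on dense_span_delta
  rintro x ⟨i, rfl⟩; exact h i

variable {S : l2N →L[ℂ] l2N} (hS : ∀ n : ℕ, S (δ n) = δ (n + 1))
include hS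

lemma adj_delta (m : ℕ) : adjoint S (δ m) =  if m = 0 then 0 else δ (m - 1) := by
  apply vec_ext
  intro n
  rw [adjoint_inner_right, hS, inner_delta]
  cases m with
  | zero => simp [Nat.succ_ne_zero]
  | succ k => simp [inner_delta, Nat.succ_inj]

lemma part1 : adjoint S * S = 1 := by
  apply clm_ext
  intro n
  rw [ContinuousLinearMap.mul_apply, hS, adj_delta hS]
  simp

lemma part3 : 1 - S * adjoint S = (innerSL ℂ (δ 0)).smulRight (δ 0) := by
  apply clm_ext
  intro n
  rw [sub_apply, ContinuousLinearMap.mul_apply, adj_delta hS, smulRight_apply, innerSL_apply_apply, inner_delta]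
  cases n with
  | zero => simp
  | succ k => simp [hS]

lemma Spow_delta (m : ℕ) : ∀ n, (S ^ m) (δ n) = δ (n + m) := by
  induction m with
  | zero => simp
  | succ k ih =>
    intro n
    rw [pow_succ, ContinuousLinearMap.mul_apply, hS, ih (n+1)]
    congr 1
    omega

lemma adjpow_delta (k : ℕ) : ∀ n, ((adjoint S) ^ k) (δ n) = if n < k then 0 else δ (n - k) := by
  induction k with
  | zero => simp
  | succ j ih =>
    intro n
    rw [pow_succ, ContinuousLinearMap.mul_apply, adj_delta hS]
    cases n with
    | zero => simp
    | succ i =>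
      simp only [Nat.succ_ne_zero, if_false, Nat.succ_sub_one]
      rw [ih i]
      simp [Nat.succ_lt_succ_iff, Nat.succ_sub_succ]

lemma E_eq (m k : ℕ) :
    S ^ m * (1 - S * adjoint S) * (adjoint S) ^ k = (innerSL ℂ (δ k)).smulRight (δ m) := by
  apply clm_ext
  intro n
  rw [ContinuousLinearMap.mul_apply, ContinuousLinearMap.mul_apply, part3 hS, adjpow_delta hS k n, smulRight_apply, smulRight_apply,
    innerSL_apply_apply, innerSL_apply_apply, inner_delta]
  by_cases h : n < k
  · simp only [if_pos h]
    rw [if_neg (by omega : ¬ k = n)]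
    simp
  · simp only [if_neg h]
    rw [inner_delta]
    by_cases hkn : k = n
    · subst hkn
      simp [Spow_delta hS]
    · rw [if_neg (by omega : ¬ 0 = n - k), if_neg hkn]
      simp

lemma E_mem (m k : ℕ) :
    (innerSL ℂ (δ k)).smulRight (δ m) ∈ StarAlgebra.adjoin ℂ {S} := by
  rw [← E_eq hS]
  have hSmem : S ∈ StarAlgebra.adjoin ℂ ({S} : Set (l2N →L[ℂ] l2N)) :=
    StarAlgebra.self_mem_adjoin_singleton ℂ S
  have hadj : adjoint S ∈ StarAlgebra.adjoin ℂ ({S} : Set (l2N →L[ℂ] l2N)) := by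
    rw [← ContinuousLinearMap.star_eq_adjoint]
    exact star_mem hSmem
  exact mul_mem (mul_mem (pow_mem hSmem m) (sub_mem (one_mem _) (mul_mem hSmem hadj)))
    (pow_mem hadj k)

omit hS in
lemma rankone_continuous (m : ℕ) :
    Continuous fun v : l2N => (innerSL ℂ v).smulRight (δ m) := by
  have h1 : Continuous fun v : l2N => innerSL ℂ v := (innerSL ℂ).continuous
  have h2 : Continuous fun f : l2N →L[ℂ] ℂ => f.smulRight (δ m) :=
    ((ContinuousLinearMap.smulRightL ℂ l2N l2N).flip (δ m)).continuous
  exact h2.comp h1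

lemma rankone_mem (m : ℕ) (v : l2N) :
    (innerSL ℂ v).smulRight (δ m) ∈ (StarAlgebra.adjoin ℂ {S}).topologicalClosure := by
  set A := (StarAlgebra.adjoin ℂ {S}).topologicalClosure with hA
  have hclosed : IsClosed (A : Set (l2N →L[ℂ] l2N)) :=
    StarSubalgebra.isClosed_topologicalClosure _
  set C : Set l2N := (fun v : l2N => (innerSL ℂ v).smulRight (δ m)) ⁻¹' (A : Set _) with hC
  have hCclosed : IsClosed C := hclosed.preimage (rankone_continuous m)
  have hspan : (Submodule.span ℂ (Set.range δ) : Set l2N) ⊆ C := by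
    intro x hx
    induction hx using Submodule.span_induction with
    | mem x h =>
      obtain ⟨k, rfl⟩ := h
      exact StarSubalgebra.le_topologicalClosure _ (E_mem hS m k)
    | zero =>
      show (innerSL ℂ (0 : l2N)).smulRight (δ m) ∈ A
      simp only [map_zero]
      have : (0 : l2N →L[ℂ] ℂ).smulRight (δ m) = 0 := by ext; simp
      rw [this]; exact zero_mem A
    | add x y _ _ hx hy =>
      show (innerSL ℂ (x + y)).smulRight (δ m) ∈ A
      have : (innerSL ℂ (x + y)).smulRight (δ m)
          = (innerSL ℂ x).smulRight (δ m) + (innerSL ℂ y).smulRight (δ m) := by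
        ext z; simp [add_smul]
      rw [this]; exact add_mem hx hy
    | smul c x _ hx =>
      show (innerSL ℂ (c • x)).smulRight (δ m) ∈ A
      have : (innerSL ℂ (c • x)).smulRight (δ m)
          = (starRingEnd ℂ c) • (innerSL ℂ x).smulRight (δ m) := by
        ext z; simp [inner_smul_left, smul_smul]
      rw [this]
      exact SMulMemClass.smul_mem _ hx
  have := closure_minimal hspan hCclosed
  rw [dense_span_delta.closure_eq] at this
  exact this (Set.mem_univ v)

omit hS in
lemma Q_norm_le (n : ℕ) (y : l2N) :
    ‖y - ∑ m ∈ Finset.range n, ⟪δ m, y⟫_ℂ • δ m‖ ≤ ‖y‖ := by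
  set p := ∑ m ∈ Finset.range n, ⟪δ m, y⟫_ℂ • δ m with hp
  set q := y - p with hq
  have horth : ⟪p, q⟫_ℂ = 0 := by
    rw [hp, sum_inner]
    apply Finset.sum_eq_zero
    intro m hm
    rw [inner_smul_left]
    have : ⟪δ m, q⟫_ℂ = 0 := by
      rw [hq, inner_sub_right, hp, inner_sum]
      simp only [inner_smul_right, inner_delta]
      rw [Finset.sum_eq_single m]
      · simp
      · intro k _ hk; rw [if_neg (fun h => hk h.symm)]; ring
      · intro h; exact absurd hm h
    rw [this, mul_zero]
  have hyd : y = p + q := by rw [hq]; abel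
  have hsq : ‖y‖ ^ 2 = ‖p‖ ^ 2 + ‖q‖ ^ 2 := by
    rw [hyd, @norm_add_sq ℂ]
    rw [horth]
    simp
  nlinarith [norm_nonneg p, norm_nonneg q, norm_nonneg y, sq_nonneg (‖p‖)]

omit hS in
lemma Q_tendsto (y : l2N) :
    Filter.Tendsto (fun n => ∑ m ∈ Finset.range n, ⟪δ m, y⟫_ℂ • δ m) Filter.atTop (nhds y) := by
  have h := (B.hasSum_repr y).tendsto_sum_nat
  convert h using 2 with n
  apply Finset.sum_congr rfl
  intro m _
  rw [B.repr_apply_apply, B_eq]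

lemma compact_mem (K : l2N →L[ℂ] l2N) (hK : IsCompactOperator K) :
    K ∈ (StarAlgebra.adjoin ℂ {S}).topologicalClosure := by
  set A := (StarAlgebra.adjoin ℂ {S}).topologicalClosure with hA
  have hclosed : IsClosed (A : Set (l2N →L[ℂ] l2N)) :=
    StarSubalgebra.isClosed_topologicalClosure _
  have key : ∀ ε > (0:ℝ), ∃ T ∈ (A : Set (l2N →L[ℂ] l2N)), dist K T < ε := by
    intro ε hε
    -- the compact set
    have hK' : IsCompactOperator (K : l2N →ₗ[ℂ] l2N) := hK
    have hM : IsCompact (closure (K '' Metric.closedBall 0 1)) :=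
      hK'.isCompact_closure_image_closedBall 1
    set M := closure (K '' Metric.closedBall 0 1) with hMdef
    obtain ⟨t, htfin, hcov⟩ := Metric.totallyBounded_iff.mp hM.totallyBounded (ε/4)
      (by positivity)
    -- eventually all centers well approximated
    have hev : ∀ᶠ n in Filter.atTop,
        ∀ y ∈ t, ‖y - ∑ m ∈ Finset.range n, ⟪δ m, y⟫_ℂ • δ m‖ < ε/4 := by
      rw [Filter.eventually_all_finite htfin]
      intro y _
      have h0 : Filter.Tendsto
          (fun n => ‖y - ∑ m ∈ Finset.range n, ⟪δ m, y⟫_ℂ • δ m‖)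
          Filter.atTop (nhds 0) := by
        have h1 : Filter.Tendsto (fun _ : ℕ => y) Filter.atTop (nhds y) := tendsto_const_nhds
        have := (h1.sub (Q_tendsto y)).norm
        simpa using this
      exact h0.eventually (gt_mem_nhds (by positivity))
    obtain ⟨n, hn⟩ := hev.exists
    -- the approximant
    set T : l2N →L[ℂ] l2N :=
      ∑ m ∈ Finset.range n, (innerSL ℂ (adjoint K (δ m))).smulRight (δ m) with hT
    have hTmem : T ∈ A := sum_mem fun m _ => rankone_mem hS m _
    refine ⟨T, hTmem, ?_⟩
    -- pointwise formula
    have hform : ∀ x : l2N, (K - T) x = K x - ∑ m ∈ Finset.range n, ⟪δ m, K x⟫_ℂ • δ m := by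
      intro x
      rw [ContinuousLinearMap.sub_apply, hT, ContinuousLinearMap.sum_apply]
      congr 1
      apply Finset.sum_congr rfl
      intro m _
      rw [smulRight_apply, innerSL_apply_apply, ContinuousLinearMap.adjoint_inner_left]
    -- pointwise bound on the unit ball
    have hunit : ∀ x : l2N, ‖x‖ ≤ 1 → ‖(K - T) x‖ ≤ ε/2 := by
      intro x hx
      have hKx : K x ∈ M := subset_closure ⟨x, Metric.mem_closedBall.mpr (by simpa using hx), rfl⟩
      obtain ⟨y, hyt, hy⟩ := Set.mem_iUnion₂.mp (hcov hKx)
      have hdist : ‖K x - y‖ < ε/4 := by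
        rw [← dist_eq_norm]; exact Metric.mem_ball.mp hy
      have hq : (K - T) x
          = ((K x - y) - ∑ m ∈ Finset.range n, ⟪δ m, K x - y⟫_ℂ • δ m)
            + (y - ∑ m ∈ Finset.range n, ⟪δ m, y⟫_ℂ • δ m) := by
        rw [hform x]
        simp only [inner_sub_right, sub_smul, Finset.sum_sub_distrib]
        abel
      rw [hq]
      calc _ ≤ ‖(K x - y) - ∑ m ∈ Finset.range n, ⟪δ m, K x - y⟫_ℂ • δ m‖
            + ‖y - ∑ m ∈ Finset.range n, ⟪δ m, y⟫_ℂ • δ m‖ := norm_add_le _ _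
        _ ≤ ‖K x - y‖ + ‖y - ∑ m ∈ Finset.range n, ⟪δ m, y⟫_ℂ • δ m‖ := by
            have := Q_norm_le n (K x - y); linarith
        _ ≤ ε/4 + ε/4 := by
            have := hn y hyt; linarith
        _ = ε/2 := by ring
    have hopnorm : ‖K - T‖ ≤ ε/2 := by
      apply ContinuousLinearMap.opNorm_le_bound _ (by positivity)
      intro x
      rcases eq_or_ne x 0 with rfl | hx0
      · rw [map_zero, norm_zero]
        positivity
      · have hxpos : (0:ℝ) < ‖x‖ := norm_pos_iff.mpr hx0
        set u := ((‖x‖⁻¹ : ℝ) : ℂ) • x with hu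
        have hunorm : ‖u‖ ≤ 1 := by
          rw [hu, norm_smul, Complex.norm_real, norm_inv, norm_norm,
            inv_mul_cancel₀ hxpos.ne']
        have hxu : x = ((‖x‖ : ℝ) : ℂ) • u := by
          rw [hu, smul_smul, ← Complex.ofReal_mul, mul_inv_cancel₀ hxpos.ne',
            Complex.ofReal_one, one_smul]
        calc ‖(K - T) x‖ = ‖x‖ * ‖(K - T) u‖ := by
              conv_lhs => rw [hxu]
              rw [map_smul, norm_smul, Complex.norm_real, Real.norm_eq_abs,
                abs_of_nonneg hxpos.le]
          _ ≤ ‖x‖ * (ε/2) := by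
              have := hunit u hunorm
              exact mul_le_mul_of_nonneg_left this hxpos.le
          _ = ε/2 * ‖x‖ := by ring
    rw [dist_eq_norm]
    linarith
  have : K ∈ closure (A : Set (l2N →L[ℂ] l2N)) :=
    Metric.mem_closure_iff.mpr key
  rwa [hclosed.closure_eq] at this


end Aux

open ContinuousLinearMap in
/-- The unilateral shift `S` on `ℓ²(ℕ)` (the bounded operator determined by
`S δₙ = δ_{n+1}`) is an isometry (`S*S = 1`), the operator `S*S − SS* = 1 − SS*`
is the rank-one orthogonal projection onto the span of `δ₀`, and the
C*-subalgebra of `B(ℓ²(ℕ))` generated by `S` contains every compact operator. -/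
theorem stmt0 (S : l2N →L[ℂ] l2N) (hS : ∀ n : ℕ, S (δ n) = δ (n + 1)) :
    adjoint S * S = 1 ∧
    adjoint S * S - S * adjoint S = (innerSL ℂ (δ 0)).smulRight (δ 0) ∧
    1 - S * adjoint S = (innerSL ℂ (δ 0)).smulRight (δ 0) ∧
    ∀ K : l2N →L[ℂ] l2N, IsCompactOperator K →
      K ∈ (StarAlgebra.adjoin ℂ {S}).topologicalClosure := by
  refine ⟨part1 hS, ?_, part3 hS, fun K hK => compact_mem hS K hK⟩
  rw [part1 hS]
  exact part3 hS
end
end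

section
/- For any subset X ⊆ ℤ and any n ∈ ℤ, the partial translation operator tₙ on ℓ²(X) is a compact operator if and only if the set {x ∈ X : x + n ∈ X} is finite. -/
set_option maxHeartbeats 2000000
noncomputable section

theorem aux8 (X : Set ℤ) (T : lp (fun _ : X => ℂ) 2 →L[ℂ] lp (fun _ : X => ℂ) 2)
    (V : Submodule ℂ (lp (fun _ : X => ℂ) 2)) [FiniteDimensional ℂ V]
    (hrange : ∀ f, T f ∈ V) : IsCompactOperator T := by
  haveI : ProperSpace V := FiniteDimensional.proper ℂ V
  refine ⟨Subtype.val '' (Metric.closedBall (0 : V) ‖T‖),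
    (isCompact_closedBall (0 : V) ‖T‖).image continuous_subtype_val, ?_⟩
  refine Filter.mem_of_superset
    (Metric.closedBall_mem_nhds (0 : lp (fun _ : X => ℂ) 2) one_pos) ?_
  intro x hx
  refine ⟨⟨T x, hrange x⟩, ?_, rfl⟩
  rw [Metric.mem_closedBall, dist_zero_right]
  show ‖T x‖ ≤ ‖T‖
  calc ‖T x‖ ≤ ‖T‖ * ‖x‖ := T.le_opNorm x
  _ ≤ ‖T‖ * 1 := mul_le_mul_of_nonneg_left
      (by simpa [dist_zero_right] using hx) (norm_nonneg _)
  _ = ‖T‖ := mul_one _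


/-- For any `X ⊆ ℤ` and `n ∈ ℤ`, the partial translation operator `tₙ` on `ℓ²(X)`
(determined by `tₙ δₓ = δ_{x+n}` if `x + n ∈ X` and `tₙ δₓ = 0` otherwise) is compact
if and only if the set `{x ∈ X : x + n ∈ X}` is finite. -/
theorem stmt8 (X : Set ℤ) (n : ℤ)
    (T : lp (fun _ : X => ℂ) 2 →L[ℂ] lp (fun _ : X => ℂ) 2)
    (hT : ∀ x : X,
      (∀ h : (x : ℤ) + n ∈ X,
        T (lp.single 2 x 1) = lp.single 2 (⟨(x : ℤ) + n, h⟩ : X) 1) ∧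
      ((x : ℤ) + n ∉ X → T (lp.single 2 x 1) = 0)) :
    IsCompactOperator T ↔ {x : ℤ | x ∈ X ∧ x + n ∈ X}.Finite := by
  set S : Set ℤ := {x : ℤ | x ∈ X ∧ x + n ∈ X} with hS
  have hnorm_single : ∀ y : X, ‖(lp.single 2 y 1 : lp (fun _ : X => ℂ) 2)‖ = 1 := by
    intro y
    have := lp.norm_single (p := 2) (E := fun _ : X => ℂ) (by norm_num) y (1 : ℂ)
    simpa using this
  constructor
  · rintro ⟨K, hK, hKmem⟩
    obtain ⟨ε, hε, hball⟩ := Metric.mem_nhds_iff.mp hKmem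
    -- the points
    set e : S → lp (fun _ : X => ℂ) 2 :=
      fun s => ((ε/2 : ℝ) : ℂ) • lp.single 2 (⟨(s : ℤ) + n, s.2.2⟩ : X) 1 with he
    have heK : ∀ s : S, e s ∈ K := by
      intro s
      have hb : (((ε/2 : ℝ) : ℂ) • lp.single 2 (⟨(s : ℤ), s.2.1⟩ : X) 1 :
          lp (fun _ : X => ℂ) 2) ∈ Metric.ball 0 ε := by
        rw [mem_ball_zero_iff, norm_smul, hnorm_single]
        simp only [Complex.norm_real, Real.norm_eq_abs, mul_one]
        rw [abs_of_pos (by linarith)]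
        linarith
      have := hball hb
      simp only [Set.mem_preimage, map_smul] at this
      rwa [(hT ⟨(s : ℤ), s.2.1⟩).1 s.2.2] at this
    have hdist : ∀ s s' : S, s ≠ s' → (ε/2 : ℝ) ≤ dist (e s) (e s') := by
      intro s s' hne
      have hane : (⟨(s : ℤ) + n, s.2.2⟩ : X) ≠ ⟨(s' : ℤ) + n, s'.2.2⟩ := by
        intro h
        apply hne
        have h2 : ((s : ℤ)) + n = ((s' : ℤ)) + n := congrArg Subtype.val h
        exact Subtype.ext (by omega)
      have key : ‖(e s - e s') (⟨(s : ℤ) + n, s.2.2⟩ : X)‖ ≤ ‖e s - e s'‖ :=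
        lp.norm_apply_le_norm (by norm_num) _ _
      rw [dist_eq_norm]
      refine le_trans ?_ key
      have : (e s - e s') (⟨(s : ℤ) + n, s.2.2⟩ : X)
          = ((ε/2 : ℝ) : ℂ) := by
        simp only [he, lp.coeFn_sub, Pi.sub_apply, lp.coeFn_smul, Pi.smul_apply]
        rw [lp.single_apply_self, lp.single_apply_ne 2 _ _ hane]
        · simp
      rw [this]
      simp only [Complex.norm_real, Real.norm_eq_abs]
      rw [abs_of_pos (by linarith)]
    obtain ⟨t, htfin, hcov⟩ := (Metric.totallyBounded_iff.mp hK.totallyBounded) (ε/4)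
      (by linarith)
    have hchoice : ∀ s : S, ∃ y ∈ t, e s ∈ Metric.ball y (ε/4) := by
      intro s
      have := hcov (heK s)
      simpa using this
    choose c hct hcball using hchoice
    have hcinj : Function.Injective c := by
      intro s s' h
      by_contra hne
      have h1 : dist (e s) (c s') < ε/4 := by rw [← h]; exact hcball s
      have h2 : dist (e s') (c s') < ε/4 := hcball s'
      have hlt : dist (e s) (e s') < ε/2 := by
        calc dist (e s) (e s') ≤ dist (e s) (c s') + dist (e s') (c s') :=
              dist_triangle_right _ _ _
        _ < ε/4 + ε/4 := add_lt_add h1 h2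
        _ = ε/2 := by ring
      exact absurd (hdist s s' hne) (not_le.mpr hlt)
    haveI : Finite t := htfin
    haveI : Finite S := Finite.of_injective (fun s => (⟨c s, hct s⟩ : t))
      (fun s s' h => hcinj (congrArg Subtype.val h))
    exact S.toFinite
  · intro hfin
    set I : Set X := {x : X | (x : ℤ) + n ∈ X} with hI
    have hIfin : I.Finite := by
      have hIeq : I = Subtype.val ⁻¹' S := by
        ext x
        simp [hI, hS, x.2]
      rw [hIeq]
      exact hfin.preimage Subtype.val_injective.injOn
    obtain ⟨V, hVfd, hrange⟩ : ∃ V : Submodule ℂ (lp (fun _ : X => ℂ) 2),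
        FiniteDimensional ℂ V ∧ ∀ f, T f ∈ V := by
      refine ⟨Submodule.span ℂ ((fun x : X => T (lp.single 2 x 1)) '' I),
        FiniteDimensional.span_of_finite ℂ (hIfin.image _), ?_⟩
      set V : Submodule ℂ (lp (fun _ : X => ℂ) 2) :=
        Submodule.span ℂ ((fun x : X => T (lp.single 2 x 1)) '' I) with hV
      haveI : FiniteDimensional ℂ V := FiniteDimensional.span_of_finite ℂ (hIfin.image _)
      have hVclosed : IsClosed (V : Set (lp (fun _ : X => ℂ) 2)) :=
        Submodule.closed_of_finiteDimensional V
      intro f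
      have hs : HasSum (fun x : X => lp.single 2 x (f x)) f :=
        lp.hasSum_single (by norm_num) f
      have hs2 : HasSum (fun x : X => T (lp.single 2 x (f x))) (T f) := hs.mapL T
      have hmem : ∀ x : X, T (lp.single 2 x (f x)) ∈ V := by
        intro x
        have heq : (lp.single 2 x (f x) : lp (fun _ : X => ℂ) 2) = f x • lp.single 2 x 1 := by
          rw [← lp.single_smul]
          congr 1
          simp
        rw [heq, map_smul]
        by_cases h : (x : ℤ) + n ∈ X
        · exact Submodule.smul_mem _ _ (Submodule.subset_span ⟨x, h, rfl⟩)
        · rw [(hT x).2 h]; simp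
      exact hVclosed.mem_of_tendsto hs2
        (Filter.Eventually.of_forall fun s => Submodule.sum_mem _ fun i _ => hmem i)
    haveI : FiniteDimensional ℂ V := hVfd
    exact aux8 X T V hrange
end
end
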